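/- arXiv:1002.4095 — 2 statements merged into one kernel-verified Lean document; each statement's English description precedes it below -/
import Mathlib

section
/- Let A be a dilation matrix for ℤ^n with smallest singular value μ > 2, and let D = A([-1/2,1/2)^n) ∩ ℤ^n. Then A yields a radix representation with digit set D: for every x ∈ ℤ^n there exist N ≥ 0 and digits d₀, …, d_N ∈ D with x = Σ_{j=0}^{N} A^j d_j. -/
open MeasureTheory Set

/-- `A` is a dilation matrix: an integer matrix all of whose complex
eigenvalues have absolute value greater than 1. -/
def IsDilation {n : ℕ} (A : Matrix (Fin n) (Fin n) ℤ) : Prop :=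
  ∀ μ ∈ spectrum ℂ (A.map (Int.cast : ℤ → ℂ)), 1 < ‖μ‖

/-- `D` is a complete set of coset representatives of `ℤ^n / A(ℤ^n)`. -/
def IsDigitSet {n : ℕ} (A : Matrix (Fin n) (Fin n) ℤ) (D : Set (Fin n → ℤ)) : Prop :=
  ∀ x : Fin n → ℤ, ∃! d : Fin n → ℤ, d ∈ D ∧ ∃ y : Fin n → ℤ, x = A.mulVec y + d

/-- The real matrix corresponding to an integer matrix. -/
noncomputable def realMat {n : ℕ} (A : Matrix (Fin n) (Fin n) ℤ) :
    Matrix (Fin n) (Fin n) ℝ :=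
  A.map (Int.cast : ℤ → ℝ)

/-- Cast an integer vector to a real vector. -/
def castVec {n : ℕ} (d : Fin n → ℤ) : Fin n → ℝ := fun i => (d i : ℝ)

/-- The self-affine set `T(A,D) = { Σ_{j=1}^∞ A^{-j} d_j : d_j ∈ D }`. -/
noncomputable def Tile {n : ℕ} (A : Matrix (Fin n) (Fin n) ℤ) (D : Set (Fin n → ℤ)) :
    Set (Fin n → ℝ) :=
  { x | ∃ f : ℕ → (Fin n → ℤ), (∀ j, f j ∈ D) ∧
      HasSum (fun j => ((realMat A)⁻¹ ^ (j + 1)).mulVec (castVec (f j))) x }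

/-- `A` yields a radix representation with digit set `D`: every integer vector is
a finite sum `Σ_{j=0}^N A^j d_j` with digits in `D`. -/
def YieldsRadix {n : ℕ} (A : Matrix (Fin n) (Fin n) ℤ) (D : Set (Fin n → ℤ)) : Prop :=
  ∀ x : Fin n → ℤ, ∃ N : ℕ, ∃ d : ℕ → (Fin n → ℤ), (∀ j ≤ N, d j ∈ D) ∧
    x = ∑ j ∈ Finset.range (N + 1), (A ^ j).mulVec (d j)

/-- The canonical fundamental domain `F = [-1/2, 1/2)^n`. -/
def Fdom (n : ℕ) : Set (Fin n → ℝ) :=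
  Set.univ.pi fun _ => Set.Ico (-(1/2) : ℝ) (1/2)

/-- The digit set `A(F) ∩ ℤ^n`, viewed as a set of integer vectors. -/
noncomputable def digitF {n : ℕ} (A : Matrix (Fin n) (Fin n) ℤ) : Set (Fin n → ℤ) :=
  { d : Fin n → ℤ | castVec d ∈ (fun v => (realMat A).mulVec v) '' Fdom n }

/-- Multiplication of a Euclidean-space vector by a real matrix,
landing in Euclidean space (so that norms are the `ℓ²` norms). -/
noncomputable def mulVecE {n : ℕ} (B : Matrix (Fin n) (Fin n) ℝ)
    (v : EuclideanSpace ℝ (Fin n)) : EuclideanSpace ℝ (Fin n) :=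
  (WithLp.equiv 2 (Fin n → ℝ)).symm (B.mulVec ((WithLp.equiv 2 (Fin n → ℝ)) v))

/-- The smallest singular value of `A` is greater than `c`: equivalently,
`‖Av‖ > c` for every unit vector `v` (Euclidean norm). -/
noncomputable def MinSingValGT {n : ℕ} (A : Matrix (Fin n) (Fin n) ℤ) (c : ℝ) : Prop :=
  ∀ v : EuclideanSpace ℝ (Fin n), ‖v‖ = 1 → c < ‖mulVecE (realMat A) v‖

/-- Vectors expressible by a radix expansion of length at most `k`. -/
def DAk {n : ℕ} (A : Matrix (Fin n) (Fin n) ℤ) (D : Set (Fin n → ℤ)) (k : ℕ) :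
    Set (Fin n → ℤ) :=
  { x : Fin n → ℤ | ∃ d : ℕ → (Fin n → ℤ), (∀ j < k, d j ∈ D) ∧
      x = ∑ j ∈ Finset.range k, (A ^ j).mulVec (d j) }

/-- `T` tiles `ℝ^n` under translation by `ℤ^n`. -/
def TilesRn {n : ℕ} (T : Set (Fin n → ℝ)) : Prop :=
  (⋃ k : Fin n → ℤ, (fun x => x + castVec k) '' T) = Set.univ ∧
  ∀ k₁ k₂ : Fin n → ℤ, k₁ ≠ k₂ →
    volume (((fun x => x + castVec k₁) '' T) ∩ ((fun x => x + castVec k₂) '' T)) = 0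
lemma round_cast_abs_le (t : ℝ) : |((round t : ℤ) : ℝ)| ≤ 2 * |t| := by
  rcases le_or_gt (1/2) |t| with h | h
  · have h1 : |(t : ℝ) - round t| ≤ 1/2 := abs_sub_round t
    have h2 := abs_sub_abs_le_abs_sub ((round t : ℝ)) t
    rw [abs_sub_comm] at h1
    linarith
  · have h0 : round t = 0 := by
      rw [round_eq, Int.floor_eq_zero_iff]
      refine ⟨by simp only [abs_lt] at h; linarith, ?_⟩
      simp only [abs_lt] at h; simp; linarith
    simp [h0]

lemma castVec_mulVec_comm {n : ℕ} (A : Matrix (Fin n) (Fin n) ℤ) (y : Fin n → ℤ) :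
    castVec (A.mulVec y) = (realMat A).mulVec (castVec y) := by
  funext i
  simp [castVec, realMat, Matrix.mulVec, dotProduct]

lemma euclid_norm_sqrt {n : ℕ} (v : Fin n → ℝ) :
    ‖((WithLp.equiv 2 (Fin n → ℝ)).symm v : EuclideanSpace ℝ (Fin n))‖
      = Real.sqrt (∑ i, (v i)^2) := by
  rw [EuclideanSpace.norm_eq]
  congr 1
  refine Finset.sum_congr rfl fun i _ => ?_
  simp [sq_abs]

lemma minSing_scaled {n : ℕ} (A : Matrix (Fin n) (Fin n) ℤ) (hμ : MinSingValGT A 2) :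
    ∀ w : EuclideanSpace ℝ (Fin n), w ≠ 0 → 2 * ‖w‖ < ‖mulVecE (realMat A) w‖ := by
  intro w hw
  have hnw : (0:ℝ) < ‖w‖ := norm_pos_iff.mpr hw
  have hu : ‖(‖w‖⁻¹ : ℝ) • w‖ = 1 := by
    rw [norm_smul, norm_inv, norm_norm, inv_mul_cancel₀ hnw.ne']
  have h2 := hμ _ hu
  have hlin : mulVecE (realMat A) ((‖w‖⁻¹ : ℝ) • w) = (‖w‖⁻¹ : ℝ) • mulVecE (realMat A) w := by
    simp [mulVecE, Matrix.mulVec_smul]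
  rw [hlin, norm_smul, norm_inv, norm_norm] at h2
  nlinarith [h2, hnw, mul_inv_cancel₀ hnw.ne']

lemma realMat_det_isUnit {n : ℕ} (A : Matrix (Fin n) (Fin n) ℤ)
    (hμ : MinSingValGT A 2) : IsUnit (realMat A).det := by
  have hs := minSing_scaled A hμ
  by_contra h
  rw [isUnit_iff_ne_zero, not_not] at h
  obtain ⟨v, hv0, hv⟩ := (Matrix.exists_mulVec_eq_zero_iff).mpr h
  have hE : ((WithLp.equiv 2 (Fin n → ℝ)).symm v : EuclideanSpace ℝ (Fin n)) ≠ 0 := by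
    simpa using hv0
  have h1 := hs _ hE
  have hz : mulVecE (realMat A) ((WithLp.equiv 2 (Fin n → ℝ)).symm v) = 0 := by
    simp [mulVecE, hv]
  rw [hz, norm_zero] at h1
  have h2 : (0:ℝ) < ‖((WithLp.equiv 2 (Fin n → ℝ)).symm v : EuclideanSpace ℝ (Fin n))‖ :=
    norm_pos_iff.mpr hE
  linarith

/-- The key digit-extraction step with strict decrease of the squared norm. -/
lemma digit_step {n : ℕ} (A : Matrix (Fin n) (Fin n) ℤ) (hμ : MinSingValGT A 2)
    (x : Fin n → ℤ) (hx : x ≠ 0) :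
    ∃ y : Fin n → ℤ, (x - A.mulVec y) ∈ digitF A ∧
      (∑ i, (y i)^2) < ∑ i, (x i)^2 := by
  have hs := minSing_scaled A hμ
  have hdet := realMat_det_isUnit A hμ
  set R := realMat A with hRdef
  have hBA : R * R⁻¹ = 1 := Matrix.mul_nonsing_inv _ hdet
  set t : Fin n → ℝ := R⁻¹.mulVec (castVec x) with htdef
  set y : Fin n → ℤ := fun i => round (t i) with hydef
  have hRt : R.mulVec t = castVec x := by
    rw [htdef, Matrix.mulVec_mulVec, hBA, Matrix.one_mulVec]
  refine ⟨y, ⟨t - castVec y, ?_, ?_⟩, ?_⟩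
  · -- t - castVec y ∈ Fdom n
    intro i _
    have hf1 := Int.fract_nonneg (t i + 1/2)
    have hf2 := Int.fract_lt_one (t i + 1/2)
    rw [Int.fract] at hf1 hf2
    simp only [Pi.sub_apply, castVec, hydef, round_eq, Set.mem_Ico]
    constructor <;> [linarith; linarith]
  · -- R.mulVec (t - castVec y) = castVec (x - A.mulVec y)
    show R.mulVec (t - castVec y) = castVec (x - A.mulVec y)
    rw [Matrix.mulVec_sub, hRt]
    funext i
    simp only [Pi.sub_apply, castVec]
    rw [← castVec_mulVec_comm]
    simp [castVec]
  · -- strict decrease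
    have ht0 : t ≠ 0 := by
      intro h
      apply hx
      have : castVec x = 0 := by rw [← hRt, h, Matrix.mulVec_zero]
      funext i
      have h2 := congrFun this i
      simp only [castVec, Pi.zero_apply] at h2 ⊢
      exact_mod_cast h2
    have hE : ((WithLp.equiv 2 (Fin n → ℝ)).symm t : EuclideanSpace ℝ (Fin n)) ≠ 0 := by
      simpa using ht0
    have h1 := hs _ hE
    have hmv : mulVecE R ((WithLp.equiv 2 (Fin n → ℝ)).symm t)
        = (WithLp.equiv 2 (Fin n → ℝ)).symm (castVec x) := by
      simp [mulVecE, hRt]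
    rw [hmv, euclid_norm_sqrt, euclid_norm_sqrt] at h1
    -- componentwise bound
    have hsum4 : ∑ i, ((y i : ℝ))^2 ≤ 4 * ∑ i, (t i)^2 := by
      rw [Finset.mul_sum]
      refine Finset.sum_le_sum fun i _ => ?_
      have hh := round_cast_abs_le (t i)
      calc ((y i : ℝ))^2 = |((y i : ℝ))|^2 := (sq_abs _).symm
        _ ≤ (2 * |t i|)^2 := by
            apply pow_le_pow_left₀ (abs_nonneg _) hh
        _ = 4 * (t i)^2 := by rw [mul_pow, sq_abs]; ring
    have hsq4 : Real.sqrt (4 * ∑ i, (t i)^2) = 2 * Real.sqrt (∑ i, (t i)^2) := by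
      rw [show (4:ℝ) = 2^2 by norm_num, Real.sqrt_mul (by positivity),
        Real.sqrt_sq (by norm_num)]
    have h2 : Real.sqrt (∑ i, ((y i : ℝ))^2) < Real.sqrt (∑ i, ((x i : ℝ))^2) := by
      calc Real.sqrt (∑ i, ((y i : ℝ))^2) ≤ Real.sqrt (4 * ∑ i, (t i)^2) :=
            Real.sqrt_le_sqrt hsum4
        _ = 2 * Real.sqrt (∑ i, (t i)^2) := hsq4
        _ < Real.sqrt (∑ i, ((x i : ℝ))^2) := by
            convert h1 using 3 <;> simp [castVec]
    have h3 : (∑ i, ((y i : ℝ))^2) < ∑ i, ((x i : ℝ))^2 := by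
      have := (Real.sqrt_lt_sqrt_iff (by positivity)).mp h2
      exact this
    exact_mod_cast h3

/-- if the smallest singular value exceeds 2, then `A` yields a
radix representation with digit set `A([-1/2,1/2)^n) ∩ ℤ^n`. -/
theorem stmt_4 {n : ℕ} (A : Matrix (Fin n) (Fin n) ℤ)
    (hA : IsDilation A) (hμ : MinSingValGT A 2) :
    YieldsRadix A (digitF A) := by
  have h0D : (0 : Fin n → ℤ) ∈ digitF A := by
    refine ⟨0, fun i _ => ⟨by norm_num, by norm_num⟩, ?_⟩
    funext i
    simp [castVec, Matrix.mulVec_zero]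
  have main : ∀ m : ℕ, ∀ x : Fin n → ℤ, (∑ i, (x i)^2).toNat ≤ m →
      ∃ N : ℕ, ∃ d : ℕ → (Fin n → ℤ), (∀ j ≤ N, d j ∈ digitF A) ∧
        x = ∑ j ∈ Finset.range (N + 1), (A ^ j).mulVec (d j) := by
    intro m
    induction m with
    | zero =>
      intro x hx
      have hx0 : x = 0 := by
        funext i
        have hnn : ∀ i, 0 ≤ (x i)^2 := fun i => sq_nonneg _
        have hsum : (0:ℤ) ≤ ∑ i, (x i)^2 := Finset.sum_nonneg fun i _ => hnn i
        have : (∑ i, (x i)^2) = 0 := by omega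
        have := (Finset.sum_eq_zero_iff_of_nonneg fun i _ => hnn i).mp this i (Finset.mem_univ i)
        exact pow_eq_zero_iff (by norm_num) |>.mp this
      refine ⟨0, fun _ => 0, fun j _ => h0D, ?_⟩
      simp [hx0, Matrix.mulVec_zero]
    | succ m ih =>
      intro x hx
      by_cases hx0 : x = 0
      · refine ⟨0, fun _ => 0, fun j _ => h0D, ?_⟩
        simp [hx0, Matrix.mulVec_zero]
      · obtain ⟨y, hdD, hlt⟩ := digit_step A hμ x hx0
        have hynn : (0:ℤ) ≤ ∑ i, (y i)^2 := Finset.sum_nonneg fun i _ => sq_nonneg _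
        have hxnn : (0:ℤ) ≤ ∑ i, (x i)^2 := Finset.sum_nonneg fun i _ => sq_nonneg _
        have hym : (∑ i, (y i)^2).toNat ≤ m := by omega
        obtain ⟨N, e, heD, hey⟩ := ih y hym
        refine ⟨N + 1, fun j => if j = 0 then x - A.mulVec y else e (j - 1), ?_, ?_⟩
        · intro j hj
          by_cases hj0 : j = 0
          · simpa [hj0] using hdD
          · simp only [hj0, if_false]
            exact heD (j - 1) (by omega)
        · rw [Finset.sum_range_succ']
          simp only [if_pos rfl, pow_zero, Matrix.one_mulVec]
          have hterm : ∀ j, (A ^ (j + 1)).mulVec (e j) = A.mulVec ((A ^ j).mulVec (e j)) := by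
            intro j
            rw [Matrix.mulVec_mulVec, ← pow_succ']
          have : ∑ j ∈ Finset.range (N + 1),
              (A ^ (j + 1)).mulVec ((fun j => if j = 0 then x - A.mulVec y else e (j - 1)) (j + 1))
              = A.mulVec y := by
            rw [hey, ← Matrix.mulVecLin_apply, map_sum]
            refine Finset.sum_congr rfl fun j _ => ?_
            simp only [Nat.succ_ne_zero, if_false, Nat.add_sub_cancel,
              Matrix.mulVecLin_apply]
            exact hterm j
          rw [this]
          funext i
          simp only [if_true, Pi.add_apply, Pi.sub_apply]
          ring
  intro x
  exact main _ x le_rfl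
end

section
/- Let A be a dilation matrix for ℤ^n. Then there exists a positive integer β ≥ 1 such that A^β yields a radix representation of ℤ^n with digit set D_β = A^β([-1/2,1/2)^n) ∩ ℤ^n. -/
open MeasureTheory Set

section Helpers

attribute [local instance] Matrix.linftyOpNormedRing Matrix.linftyOpNormedAlgebra

/-- nnnorm is preserved by mapping a real matrix to a complex matrix. -/
private lemma nnnorm_map_ofReal {n : ℕ} (P : Matrix (Fin n) (Fin n) ℝ) :
    ‖P.map (algebraMap ℝ ℂ)‖₊ = ‖P‖₊ := by
  rw [Matrix.linfty_opNNNorm_def, Matrix.linfty_opNNNorm_def]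
  congr 1
  funext i
  congr 1
  funext j
  simp [Matrix.map_apply, Complex.coe_algebraMap]

/-- The key analytic fact: some power of a dilation matrix has a very
contractive inverse. -/
private lemma exists_beta {n : ℕ} (A : Matrix (Fin n) (Fin n) ℤ) (hA : IsDilation A) :
    ∃ β : ℕ, 1 ≤ β ∧ (realMat (A ^ β)).det ≠ 0 ∧
      ∀ v : Fin n → ℝ, ‖(realMat (A ^ β))⁻¹.mulVec v‖ ≤ (1/4) * ‖v‖ := by
  classical
  set Ac : Matrix (Fin n) (Fin n) ℂ := A.map (Int.cast : ℤ → ℂ) with hAc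
  have hU : IsUnit Ac := by
    rw [← spectrum.zero_notMem_iff ℂ]
    intro h0
    have := hA 0 h0
    simp at this
    exact absurd this (by norm_num)
  have hu : (hU.unit : Matrix (Fin n) (Fin n) ℂ) = Ac := hU.unit_spec
  set Mc : Matrix (Fin n) (Fin n) ℂ := Ac⁻¹ with hMcdef
  have hMc : Mc = ((hU.unit⁻¹ : (Matrix (Fin n) (Fin n) ℂ)ˣ) : Matrix (Fin n) (Fin n) ℂ) := by
    rw [Matrix.coe_units_inv, hu]
  have hspec : ∀ z ∈ spectrum ℂ Mc, ‖z‖₊ < 1 := by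
    intro z hz
    rw [hMc, ← spectrum.map_inv, Set.mem_inv] at hz
    rw [hu] at hz
    have h1 : 1 < ‖z⁻¹‖ := hA _ hz
    rw [norm_inv] at h1
    have hz0 : ‖z‖ < 1 := by
      rcases eq_or_lt_of_le (norm_nonneg z) with h | h
      · simp [← h]
      · exact (one_lt_inv_iff₀.mp h1).2
    exact_mod_cast hz0
  have hρ : spectralRadius ℂ Mc < 1 := by
    rcases Nat.eq_zero_or_pos n with h | h
    · haveI : Subsingleton (Matrix (Fin n) (Fin n) ℂ) := by
        subst h
        exact ⟨fun a b => funext fun i => i.elim0⟩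
      rw [spectrum.SpectralRadius.of_subsingleton]
      exact zero_lt_one
    · haveI : Nonempty (Fin n) := ⟨⟨0, h⟩⟩
      have := spectrum.spectralRadius_lt_of_forall_lt (a := Mc) (r := 1) hspec
      simpa using this
  have hglf := spectrum.pow_nnnorm_pow_one_div_tendsto_nhds_spectralRadius Mc
  have hev : ∀ᶠ k : ℕ in Filter.atTop,
      ((‖Mc ^ k‖₊ : ENNReal)) ^ ((1 : ℝ)/(k : ℝ)) < 1 := hglf.eventually_lt_const hρ
  obtain ⟨k0, hk0⟩ := Filter.eventually_atTop.mp hev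
  set k1 := k0 + 1 with hk1def
  have hk1 : ((‖Mc ^ k1‖₊ : ENNReal)) ^ ((1 : ℝ)/(k1 : ℝ)) < 1 := hk0 _ (Nat.le_add_right _ _)
  have hMk : ‖Mc ^ k1‖ < 1 := by
    by_contra hge
    push_neg at hge
    have h1 : (1 : ENNReal) ≤ ((‖Mc ^ k1‖₊ : ENNReal)) := by
      exact_mod_cast hge
    have h2 : (0:ℝ) ≤ (1 : ℝ)/(k1 : ℝ) := by positivity
    have h3 := ENNReal.rpow_le_rpow h1 h2
    rw [ENNReal.one_rpow] at h3
    exact absurd hk1 (not_lt.mpr h3)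
  set c := ‖Mc ^ k1‖ with hcdef
  have hc0 : 0 ≤ c := norm_nonneg _
  have htend := tendsto_pow_atTop_nhds_zero_of_lt_one hc0 hMk
  obtain ⟨m0, hm0⟩ := Filter.eventually_atTop.mp (htend.eventually_lt_const (by norm_num : (0:ℝ) < 1/4))
  set m := m0 + 1 with hmdef
  have hcm : c ^ m < 1/4 := hm0 _ (Nat.le_add_right _ _)
  refine ⟨k1 * m, Nat.one_le_iff_ne_zero.mpr (by positivity), ?_⟩
  set β := k1 * m with hβdef
  have hpow : ‖Mc ^ β‖ ≤ c ^ m := by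
    rw [hβdef, pow_mul]
    exact norm_pow_le' _ (by positivity)
  -- transfer to the real matrix
  set R := realMat (A ^ β) with hRdef
  have hmapR : R.map (algebraMap ℝ ℂ) = Ac ^ β := by
    have h1 : R.map (algebraMap ℝ ℂ) = (A ^ β).map (Int.cast : ℤ → ℂ) := by
      ext i j
      simp [hRdef, realMat, Matrix.map_apply]
    rw [h1]
    have h2 : (A ^ β).map (Int.cast : ℤ → ℂ) = (Int.castRingHom ℂ).mapMatrix (A ^ β) := rfl
    rw [h2, map_pow]
    rfl
  have hAcβ : IsUnit (Ac ^ β) := hU.pow β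
  have hdetc : (Ac ^ β).det ≠ 0 := by
    have := (Matrix.isUnit_iff_isUnit_det _).mp hAcβ
    exact this.ne_zero
  have hdetR : R.det ≠ 0 := by
    intro h
    apply hdetc
    have h6 := (algebraMap ℝ ℂ).map_det R
    rw [RingHom.mapMatrix_apply, hmapR] at h6
    rw [h, map_zero] at h6
    exact h6.symm
  have hMcβ : Mc ^ β = (Ac ^ β)⁻¹ := by
    calc Mc ^ β = ((hU.unit⁻¹ ^ β : (Matrix (Fin n) (Fin n) ℂ)ˣ) :
            Matrix (Fin n) (Fin n) ℂ) := by rw [hMc, Units.val_pow_eq_pow_val]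
    _ = (((hU.unit ^ β)⁻¹ : (Matrix (Fin n) (Fin n) ℂ)ˣ) :
            Matrix (Fin n) (Fin n) ℂ) := by rw [inv_pow]
    _ = (((hU.unit ^ β : (Matrix (Fin n) (Fin n) ℂ)ˣ) : Matrix (Fin n) (Fin n) ℂ))⁻¹ := by
            rw [Matrix.coe_units_inv]
    _ = (Ac ^ β)⁻¹ := by rw [Units.val_pow_eq_pow_val, hu]
  have hinvmap : R⁻¹.map (algebraMap ℝ ℂ) = Mc ^ β := by
    have h1 : (R.map (algebraMap ℝ ℂ)) * (R⁻¹.map (algebraMap ℝ ℂ)) = 1 := by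
      rw [← Matrix.map_mul, Matrix.mul_nonsing_inv R (isUnit_iff_ne_zero.mpr hdetR),
        Matrix.map_one _ (map_zero _) (map_one _)]
    rw [hMcβ, ← hmapR]
    exact (Matrix.inv_eq_right_inv h1).symm
  have hRnorm : ‖R⁻¹‖ ≤ 1/4 := by
    have h1 : ‖R⁻¹‖₊ = ‖Mc ^ β‖₊ := by rw [← hinvmap, nnnorm_map_ofReal]
    have h2 : ‖R⁻¹‖ = ‖Mc ^ β‖ := congrArg NNReal.toReal h1
    rw [h2]
    exact hpow.trans hcm.le
  refine ⟨hdetR, fun v => ?_⟩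
  calc ‖R⁻¹.mulVec v‖ ≤ ‖R⁻¹‖ * ‖v‖ := Matrix.linfty_opNorm_mulVec _ _
  _ ≤ (1/4) * ‖v‖ := mul_le_mul_of_nonneg_right hRnorm (norm_nonneg v)

end Helpers


private lemma castVec_mulVec {n : ℕ} (B : Matrix (Fin n) (Fin n) ℤ) (y : Fin n → ℤ) :
    castVec (B.mulVec y) = (realMat B).mulVec (castVec y) := by
  funext i
  simp only [castVec, realMat, Matrix.mulVec, dotProduct, Matrix.map_apply]
  push_cast
  rfl

private lemma castVec_sub {n : ℕ} (a b : Fin n → ℤ) :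
    castVec (a - b) = castVec a - castVec b := by
  funext i
  simp [castVec]

private lemma mulVec_sum {n : ℕ} (B : Matrix (Fin n) (Fin n) ℤ) (s : Finset ℕ)
    (v : ℕ → Fin n → ℤ) :
    B.mulVec (∑ j ∈ s, v j) = ∑ j ∈ s, B.mulVec (v j) := by
  simp only [← Matrix.mulVecLin_apply, map_sum]

private lemma radix_of_contraction {n : ℕ} (B : Matrix (Fin n) (Fin n) ℤ)
    (hdet : (realMat B).det ≠ 0)
    (hc : ∀ v : Fin n → ℝ, ‖(realMat B)⁻¹.mulVec v‖ ≤ (1/4) * ‖v‖) :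
    YieldsRadix B (digitF B) := by
  classical
  set R := realMat B with hRdef
  have hRinv : R * R⁻¹ = 1 := Matrix.mul_nonsing_inv _ (isUnit_iff_ne_zero.mpr hdet)
  suffices H : ∀ m : ℕ, ∀ x : Fin n → ℤ, (∀ i, |x i| ≤ (m : ℤ)) →
      ∃ N : ℕ, ∃ d : ℕ → (Fin n → ℤ), (∀ j ≤ N, d j ∈ digitF B) ∧
        x = ∑ j ∈ Finset.range (N + 1), (B ^ j).mulVec (d j) by
    intro x
    refine H (Finset.univ.sup fun i => (x i).natAbs) x fun i => ?_
    have h1 : (x i).natAbs ≤ Finset.univ.sup fun i => (x i).natAbs :=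
      Finset.le_sup (f := fun i => (x i).natAbs) (Finset.mem_univ i)
    rw [Int.abs_eq_natAbs]
    exact_mod_cast h1
  intro m
  induction m with
  | zero =>
    intro x hx
    have hx0 : x = 0 := funext fun i => by have := hx i; simpa using this
    subst hx0
    refine ⟨0, fun _ => 0, fun j _ => ?_, by simp⟩
    refine ⟨0, Set.mem_univ_pi.mpr fun i => ?_, ?_⟩
    · constructor <;> norm_num
    · funext i
      simp [castVec, Matrix.mulVec_zero]
  | succ m ih =>
    intro x hx
    set z := R⁻¹.mulVec (castVec x) with hz
    set y : Fin n → ℤ := fun i => ⌊z i + 1/2⌋ with hy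
    set d := x - B.mulVec y with hd
    have hf : ∀ i, -(1/2 : ℝ) ≤ z i - (y i : ℝ) ∧ z i - (y i : ℝ) < 1/2 := by
      intro i
      have h1 := Int.floor_le (z i + 1/2)
      have h2 := Int.lt_floor_add_one (z i + 1/2)
      have h3 : ((y i : ℤ) : ℝ) = (⌊z i + 1/2⌋ : ℝ) := by rw [hy]
      exact ⟨by rw [h3]; linarith, by rw [h3]; linarith⟩
    have hxz : R.mulVec z = castVec x := by
      rw [hz, Matrix.mulVec_mulVec, hRinv, Matrix.one_mulVec]
    have hdF : d ∈ digitF B := by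
      refine ⟨z - castVec y, Set.mem_univ_pi.mpr fun i => ⟨(hf i).1, (hf i).2⟩, ?_⟩
      show (realMat B).mulVec (z - castVec y) = castVec d
      rw [← hRdef, Matrix.mulVec_sub, hxz, hd, castVec_sub, castVec_mulVec, ← hRdef]
    have hyb : ∀ i, |y i| ≤ (m : ℤ) := by
      intro i
      have hzi : |z i| ≤ (1/4) * ‖castVec x‖ := by
        have h1 : ‖z i‖ ≤ ‖z‖ := norm_le_pi_norm z i
        have h2 := hc (castVec x)
        rw [← hz] at h2
        rw [Real.norm_eq_abs] at h1
        linarith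
      have hxn : ‖castVec x‖ ≤ ((m : ℝ) + 1) := by
        refine (pi_norm_le_iff_of_nonneg (by positivity)).mpr fun i => ?_
        rw [Real.norm_eq_abs]
        have h5 : |(x i : ℝ)| ≤ (m : ℝ) + 1 := by
          have := hx i
          have : |(x i : ℝ)| = ((|x i| : ℤ) : ℝ) := by push_cast; rfl
          rw [this]
          exact_mod_cast by push_cast; omega
        simpa [castVec] using h5
      have hz1 : z i ≤ |z i| := le_abs_self _
      have hz2 : -|z i| ≤ z i := neg_abs_le _
      have hy1 : |(y i : ℝ)| ≤ |z i| + 1/2 := by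
        have := hf i
        refine abs_le.mpr ⟨by linarith, by linarith⟩
      have hm0 : (0:ℝ) ≤ (m : ℝ) := Nat.cast_nonneg m
      have hfin : |(y i : ℝ)| < (m : ℝ) + 1 := by linarith
      have hint : |y i| < (m : ℤ) + 1 := by
        have hr : ((|y i| : ℤ) : ℝ) < ((m : ℤ) : ℝ) + 1 := by push_cast; exact hfin
        exact_mod_cast hr
      omega
    obtain ⟨N, e, he, hrep⟩ := ih y hyb
    refine ⟨N + 1, fun j => if j = 0 then d else e (j - 1), ?_, ?_⟩
    · intro j hj
      by_cases hj0 : j = 0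
      · simpa [hj0] using hdF
      · simp only [if_neg hj0]
        exact he _ (by omega)
    · have hxd : x = B.mulVec y + d := by rw [hd]; abel
      rw [Finset.sum_range_succ']
      simp only [if_pos rfl, pow_zero, Matrix.one_mulVec]
      have hstep : ∀ j ∈ Finset.range (N + 1),
          (B ^ (j + 1)).mulVec ((fun j => if j = 0 then d else e (j - 1)) (j + 1))
            = B.mulVec ((B ^ j).mulVec (e j)) := by
        intro j _
        simp only [Nat.add_sub_cancel, if_neg (Nat.succ_ne_zero j)]
        rw [Matrix.mulVec_mulVec, ← pow_succ']
      rw [Finset.sum_congr rfl hstep, ← mulVec_sum, ← hrep]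
      exact hxd


/-- some power of a dilation matrix yields a radix representation. -/
theorem stmt_5 {n : ℕ} (A : Matrix (Fin n) (Fin n) ℤ) (hA : IsDilation A) :
    ∃ β : ℕ, 1 ≤ β ∧ YieldsRadix (A ^ β) (digitF (A ^ β)) := by
  obtain ⟨β, hβ, hdet, hc⟩ := exists_beta A hA
  exact ⟨β, hβ, radix_of_contraction _ hdet hc⟩
end
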